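/- Let n ≥ 1, let J ∈ M_{2n}(ℂ) have n×n blocks [[0, −I],[I, 0]], and let λ ∈ M_{2n}(ℂ) be the block diagonal matrix [[I, 0],[0, −I]]. Then the conjugation orbit {g λ g^{−1} : g ∈ Sp(2n,ℂ)} equals the set of all A ∈ M_{2n}(ℂ) satisfying Aᵗ J + J A = 0 and A² = I; equivalently, it is the set of block matrices [[x, y],[z, −xᵗ]] with y and z symmetric n×n matrices, whose square is the identity. -/

import Mathlib

open Matrix

namespace SympAux

variable {n : ℕ}

/-- The standard symplectic matrix. -/
noncomputable abbrev Jm (n : ℕ) : Matrix (Fin n ⊕ Fin n) (Fin n ⊕ Fin n) ℂ :=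
  Matrix.fromBlocks 0 (-1) 1 0

/-- The matrix `diag(I, -I)`. -/
noncomputable abbrev Lm (n : ℕ) : Matrix (Fin n ⊕ Fin n) (Fin n ⊕ Fin n) ℂ :=
  Matrix.fromBlocks 1 0 0 (-1)

lemma negone_blocks : (-1 : Matrix (Fin n ⊕ Fin n) (Fin n ⊕ Fin n) ℂ)
    = Matrix.fromBlocks (-1) 0 0 (-1) := by
  rw [← Matrix.fromBlocks_one, Matrix.fromBlocks_neg]; simp

lemma Jm_mul_Jm : Jm n * Jm n = -1 := by
  rw [negone_blocks]; simp [Jm, Matrix.fromBlocks_multiply]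

lemma Jm_transpose : (Jm n)ᵀ = -Jm n := by
  simp only [Jm, Matrix.fromBlocks_transpose, Matrix.fromBlocks_neg, Matrix.transpose_zero,
    Matrix.transpose_one, Matrix.transpose_neg, neg_neg, neg_zero]

lemma Lm_transpose : (Lm n)ᵀ = Lm n := by
  simp [Lm, Matrix.fromBlocks_transpose]

lemma Lm_mul_Lm : Lm n * Lm n = 1 := by
  rw [← Matrix.fromBlocks_one]; simp [Lm, Matrix.fromBlocks_multiply]

lemma Lm_mul_Jm_add_Jm_mul_Lm : Lm n * Jm n + Jm n * Lm n = 0 := by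
  simp [Lm, Jm, Matrix.fromBlocks_multiply, Matrix.fromBlocks_add]

lemma isUnit_Jm : IsUnit (Jm n) := by
  refine ⟨⟨Jm n, -(Jm n), ?_, ?_⟩, rfl⟩
  · rw [mul_neg, Jm_mul_Jm, neg_neg]
  · rw [neg_mul, Jm_mul_Jm, neg_neg]

lemma det_Jm_ne_zero : (Jm n).det ≠ 0 :=
  ((Matrix.isUnit_iff_isUnit_det _).mp isUnit_Jm).ne_zero

lemma isUnit_of_symplectic {g : Matrix (Fin n ⊕ Fin n) (Fin n ⊕ Fin n) ℂ}
    (hg : gᵀ * Jm n * g = Jm n) : IsUnit g := by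
  rw [Matrix.isUnit_iff_isUnit_det, isUnit_iff_ne_zero]
  intro h
  apply det_Jm_ne_zero (n := n)
  have := congrArg Matrix.det hg
  rw [Matrix.det_mul, Matrix.det_mul, Matrix.det_transpose, h] at this
  simpa using this.symm

/-- The forward (easy) direction. -/
lemma forward {g : Matrix (Fin n ⊕ Fin n) (Fin n ⊕ Fin n) ℂ}
    (hg : gᵀ * Jm n * g = Jm n) :
    (g * Lm n * g⁻¹)ᵀ * Jm n + Jm n * (g * Lm n * g⁻¹) = 0 ∧
      (g * Lm n * g⁻¹) * (g * Lm n * g⁻¹) = 1 := by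
  have hu := isUnit_of_symplectic hg
  have hd : IsUnit g.det := (Matrix.isUnit_iff_isUnit_det _).mp hu
  have hgi : g * g⁻¹ = 1 := Matrix.mul_nonsing_inv g hd
  have hig : g⁻¹ * g = 1 := Matrix.nonsing_inv_mul g hd
  have hgit : (g⁻¹)ᵀ * gᵀ = 1 := by rw [← Matrix.transpose_mul, hgi, Matrix.transpose_one]
  have h2 : gᵀ * Jm n = Jm n * g⁻¹ := by
    calc gᵀ * Jm n = gᵀ * Jm n * (g * g⁻¹) := by rw [hgi, mul_one]
    _ = (gᵀ * Jm n * g) * g⁻¹ := by noncomm_ring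
    _ = Jm n * g⁻¹ := by rw [hg]
  have h3 : Jm n * g = (g⁻¹)ᵀ * Jm n := by
    calc Jm n * g = ((g⁻¹)ᵀ * gᵀ) * Jm n * g := by rw [hgit, one_mul]
    _ = (g⁻¹)ᵀ * (gᵀ * Jm n * g) := by noncomm_ring
    _ = (g⁻¹)ᵀ * Jm n := by rw [hg]
  constructor
  · have ht : (g * Lm n * g⁻¹)ᵀ = (g⁻¹)ᵀ * Lm n * gᵀ := by
      rw [Matrix.transpose_mul, Matrix.transpose_mul, Lm_transpose]; noncomm_ring
    calc (g * Lm n * g⁻¹)ᵀ * Jm n + Jm n * (g * Lm n * g⁻¹)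
        = (g⁻¹)ᵀ * Lm n * (gᵀ * Jm n) + (Jm n * g) * (Lm n * g⁻¹) := by rw [ht]; noncomm_ring
      _ = (g⁻¹)ᵀ * (Lm n * Jm n + Jm n * Lm n) * g⁻¹ := by rw [h2, h3]; noncomm_ring
      _ = 0 := by rw [Lm_mul_Jm_add_Jm_mul_Lm, mul_zero, zero_mul]
  · calc (g * Lm n * g⁻¹) * (g * Lm n * g⁻¹)
        = g * Lm n * (g⁻¹ * g) * Lm n * g⁻¹ := by noncomm_ring
      _ = g * (Lm n * Lm n) * g⁻¹ := by rw [hig]; noncomm_ring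
      _ = 1 := by rw [Lm_mul_Lm, mul_one, hgi]

set_option maxHeartbeats 2000000 in
/-- The hard direction. -/
lemma exists_g (A : Matrix (Fin n ⊕ Fin n) (Fin n ⊕ Fin n) ℂ)
    (h1 : Aᵀ * Jm n + Jm n * A = 0) (h2 : A * A = 1) :
    ∃ g, gᵀ * Jm n * g = Jm n ∧ A = g * Lm n * g⁻¹ := by
  classical
  set B : LinearMap.BilinForm ℂ ((Fin n ⊕ Fin n) → ℂ) := Matrix.toBilin' (Jm n) with hB
  have hBapp : ∀ x y, B x y = x ⬝ᵥ (Jm n) *ᵥ y := fun x y => Matrix.toBilin'_apply' _ _ _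
  have hskew : ∀ x y, B x y = -B y x := by
    intro x y
    rw [hBapp, hBapp, Matrix.dotProduct_mulVec, ← Matrix.mulVec_transpose, Jm_transpose,
      Matrix.neg_mulVec, neg_dotProduct, dotProduct_comm]
  have hrefl : B.IsRefl := fun x y h => by rw [hskew y x, h, neg_zero]
  have hnd : B.Nondegenerate :=
    Matrix.Nondegenerate.toBilin' (Matrix.nondegenerate_of_det_ne_zero det_Jm_ne_zero)
  have hndr : ∀ w, (∀ v, B v w = 0) → w = 0 := fun w h =>
    hnd.1 w fun v => by rw [hskew w v, h v, neg_zero]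
  clear hB
  clear_value B
  have hkey : ∀ x y, B (A *ᵥ x) y + B x (A *ᵥ y) = 0 := by
    intro x y
    have h0 : x ⬝ᵥ ((Aᵀ * Jm n + Jm n * A) *ᵥ y) = 0 := by
      rw [h1, Matrix.zero_mulVec, dotProduct_zero]
    rw [Matrix.add_mulVec, dotProduct_add] at h0
    have e1 : x ⬝ᵥ (Aᵀ * Jm n) *ᵥ y = B (A *ᵥ x) y := by
      rw [hBapp, ← Matrix.mulVec_mulVec, dotProduct_comm (A *ᵥ x),
        Matrix.dotProduct_mulVec, dotProduct_comm, Matrix.vecMul_transpose]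
    have e2 : x ⬝ᵥ (Jm n * A) *ᵥ y = B x (A *ᵥ y) := by
      rw [hBapp, ← Matrix.mulVec_mulVec]
    rw [e1, e2] at h0
    exact h0
  set Vp := LinearMap.ker (Matrix.mulVecLin (A - 1)) with hVp
  set Vm := LinearMap.ker (Matrix.mulVecLin (A + 1)) with hVm
  have hmemp : ∀ x, x ∈ Vp ↔ A *ᵥ x = x := by
    intro x
    rw [hVp, LinearMap.mem_ker, Matrix.mulVecLin_apply, Matrix.sub_mulVec,
      Matrix.one_mulVec, sub_eq_zero]
  have hmemm : ∀ x, x ∈ Vm ↔ A *ᵥ x = -x := by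
    intro x
    rw [hVm, LinearMap.mem_ker, Matrix.mulVecLin_apply, Matrix.add_mulVec,
      Matrix.one_mulVec, add_eq_zero_iff_eq_neg]
  clear hVp hVm
  clear_value Vp Vm
  have hA2 : ∀ x, A *ᵥ (A *ᵥ x) = x := by
    intro x; rw [Matrix.mulVec_mulVec, h2, Matrix.one_mulVec]
  have hdisj : Disjoint Vp Vm := by
    rw [Submodule.disjoint_def]
    intro x hxp hxm
    have e1 := (hmemp x).mp hxp
    have e2 := (hmemm x).mp hxm
    have e3 : x + x = 0 := by nth_rewrite 2 [← e1]; rw [e2, add_neg_cancel]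
    have e4 : (2 : ℂ) • x = 0 := by rw [two_smul]; exact e3
    rcases smul_eq_zero.mp e4 with h | h
    · exact absurd h two_ne_zero
    · exact h
  have hco : Vp ⊔ Vm = ⊤ := by
    rw [eq_top_iff]
    intro x _
    rw [Submodule.mem_sup]
    refine ⟨(2⁻¹ : ℂ) • (x + A *ᵥ x), ?_, (2⁻¹ : ℂ) • (x - A *ᵥ x), ?_, by module⟩
    · rw [hmemp, Matrix.mulVec_smul, Matrix.mulVec_add, hA2, add_comm]
    · rw [hmemm, Matrix.mulVec_smul, Matrix.mulVec_sub, hA2, ← neg_sub, smul_neg]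
  have hcompl : IsCompl Vp Vm := ⟨hdisj, codisjoint_iff.mpr hco⟩
  have hisoP : ∀ x ∈ Vp, ∀ y ∈ Vp, B x y = 0 := by
    intro x hx y hy
    have h := hkey x y
    rw [(hmemp x).mp hx, (hmemp y).mp hy] at h
    exact add_self_eq_zero.mp h
  have hisoM : ∀ x ∈ Vm, ∀ y ∈ Vm, B x y = 0 := by
    intro x hx y hy
    have h := hkey x y
    rw [(hmemm x).mp hx, (hmemm y).mp hy] at h
    simp only [map_neg, LinearMap.neg_apply] at h
    have := add_self_eq_zero.mp h
    exact neg_eq_zero.mp this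
  have hV : Module.finrank ℂ ((Fin n ⊕ Fin n) → ℂ) = n + n := by
    rw [Module.finrank_pi]; simp
  have horthP : Vp ≤ B.orthogonal Vp := by
    intro y hy
    rw [LinearMap.BilinForm.mem_orthogonal_iff]
    intro x hx
    exact LinearMap.BilinForm.isOrtho_def.mpr (hisoP x hx y hy)
  have horthM : Vm ≤ B.orthogonal Vm := by
    intro y hy
    rw [LinearMap.BilinForm.mem_orthogonal_iff]
    intro x hx
    exact LinearMap.BilinForm.isOrtho_def.mpr (hisoM x hx y hy)
  have hrkP : Module.finrank ℂ Vp ≤ n := by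
    have ho := LinearMap.BilinForm.finrank_orthogonal hnd Vp
    have hm := Submodule.finrank_mono horthP
    rw [ho, hV] at hm
    omega
  have hrkM : Module.finrank ℂ Vm ≤ n := by
    have ho := LinearMap.BilinForm.finrank_orthogonal hnd Vm
    have hm := Submodule.finrank_mono horthM
    rw [ho, hV] at hm
    omega
  have hsum : Module.finrank ℂ Vp + Module.finrank ℂ Vm = n + n := by
    rw [← hV]; exact Submodule.finrank_add_eq_of_isCompl hcompl
  have hrkP' : Module.finrank ℂ Vp = n := by omega
  have hrkM' : Module.finrank ℂ Vm = n := by omega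
  -- the pairing between `Vm` and the dual of `Vp`
  set φ : Vm →ₗ[ℂ] Module.Dual ℂ Vp := (B.compl₁₂ Vp.subtype Vm.subtype).flip with hφdef
  have hφ : ∀ (w : Vm) (x : Vp), φ w x = B x w := fun w x => rfl
  have hφinj : Function.Injective φ := by
    rw [← LinearMap.ker_eq_bot, LinearMap.ker_eq_bot']
    intro w hw
    have hw0 : ∀ v, B v (w : (Fin n ⊕ Fin n) → ℂ) = 0 := by
      intro v
      have hv : v ∈ Vp ⊔ Vm := by rw [hco]; trivial
      obtain ⟨p, hp, m, hm, rfl⟩ := Submodule.mem_sup.mp hv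
      have e1 : B p (w : (Fin n ⊕ Fin n) → ℂ) = 0 := by
        have := congrArg (fun ψ => ψ (⟨p, hp⟩ : Vp)) hw
        simpa [hφ] using this
      have e2 : B m (w : (Fin n ⊕ Fin n) → ℂ) = 0 := hisoM m hm w w.2
      rw [map_add, LinearMap.add_apply, e1, e2, add_zero]
    exact Subtype.ext (hndr _ hw0)
  set equiv : Vm ≃ₗ[ℂ] Module.Dual ℂ Vp :=
    LinearMap.linearEquivOfInjective φ hφinj
      (by rw [hrkM', Subspace.dual_finrank_eq, hrkP']) with hequiv
  set e : Module.Basis (Fin n) ℂ Vp := Module.finBasisOfFinrankEq ℂ Vp hrkP' with he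
  set f : Module.Basis (Fin n) ℂ Vm := e.dualBasis.map equiv.symm with hf
  have hef : ∀ i j, B (e i) (f j) = if i = j then 1 else 0 := by
    intro i j
    have h1 : equiv (f j) = e.dualBasis j := by
      rw [hf, Module.Basis.map_apply, LinearEquiv.apply_symm_apply]
    have h2 : φ (f j) = e.dualBasis j := by
      rw [← h1, hequiv, LinearMap.linearEquivOfInjective_apply]
    have h3 := congrArg (fun ψ => ψ (e i)) h2
    rw [hφ] at h3
    rw [h3, Module.Basis.dualBasis_apply_self]
  clear hφ hequiv he hf hφdef
  clear_value f e
  clear equiv hφinj φ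
  set col : (Fin n ⊕ Fin n) → ((Fin n ⊕ Fin n) → ℂ) :=
    Sum.elim (fun i => ((e i : Vp) : (Fin n ⊕ Fin n) → ℂ))
      (fun j => -((f j : Vm) : (Fin n ⊕ Fin n) → ℂ)) with hcoldef
  set g : Matrix (Fin n ⊕ Fin n) (Fin n ⊕ Fin n) ℂ := Matrix.of fun k c => col c k with hg
  have hgcol : ∀ c, g *ᵥ Pi.single c 1 = col c := by
    intro c
    rw [Matrix.mulVec_single]
    funext k
    simp [hg]
  have hBcol : ∀ c d, B (col c) (col d) = Jm n c d := by
    rintro (i | i) (j | j)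
    · simpa [hcoldef, Jm, Matrix.fromBlocks_apply₁₁] using hisoP _ (e i).2 _ (e j).2
    · simp only [hcoldef, Sum.elim_inl, Sum.elim_inr, map_neg, hef]
      simp [Jm, Matrix.fromBlocks_apply₁₂, Matrix.one_apply]
    · rw [hskew]
      simp only [hcoldef, Sum.elim_inl, Sum.elim_inr, map_neg, hef]
      simp [Jm, Matrix.fromBlocks_apply₂₁, Matrix.one_apply, eq_comm]
    · have h0 : B (-((f i : Vm) : (Fin n ⊕ Fin n) → ℂ))
          (-((f j : Vm) : (Fin n ⊕ Fin n) → ℂ)) = B (f i) (f j) := by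
        simp only [map_neg, LinearMap.neg_apply, neg_neg]
      simp only [hcoldef, Sum.elim_inr]
      rw [h0]
      simpa [Jm, Matrix.fromBlocks_apply₂₂] using hisoM _ (f i).2 _ (f j).2
  have hg1 : gᵀ * Jm n * g = Jm n := by
    ext c d
    rw [← hBcol c d, hBapp]
    simp only [Matrix.mul_apply, Matrix.transpose_apply, Matrix.mulVec, dotProduct,
      Finset.sum_mul, Finset.mul_sum, hg, Matrix.of_apply]
    rw [Finset.sum_comm]
    exact Finset.sum_congr rfl fun k _ => Finset.sum_congr rfl fun l _ => by ring
  have hLm1 : ∀ (d : Fin n ⊕ Fin n) (i : Fin n),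
      Lm n d (Sum.inl i) = if d = Sum.inl i then 1 else 0 := by
    rintro (d | d) i <;>
      simp [Lm, Matrix.fromBlocks_apply₁₁, Matrix.fromBlocks_apply₂₁, Matrix.one_apply]
  have hLm2 : ∀ (d : Fin n ⊕ Fin n) (j : Fin n),
      Lm n d (Sum.inr j) = if d = Sum.inr j then -1 else 0 := by
    rintro (d | d) j
    · simp [Lm, Matrix.fromBlocks_apply₁₂]
    · simp only [Lm, Matrix.fromBlocks_apply₂₂, Matrix.neg_apply, Matrix.one_apply,
        Sum.inr.injEq]
      split <;> simp
  have hAg : A * g = g * Lm n := by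
    ext k c
    have hlhs : (A * g) k c = (A *ᵥ col c) k := by
      simp [Matrix.mul_apply, Matrix.mulVec, dotProduct, hg]
    cases c with
    | inl i =>
      have hAc : A *ᵥ col (Sum.inl i) = col (Sum.inl i) := by
        simpa [hcoldef] using (hmemp _).mp (e i).2
      rw [hlhs, hAc]
      simp [Matrix.mul_apply, hLm1, mul_ite, Finset.sum_ite_eq', hg]
    | inr j =>
      have hfj : A *ᵥ ((f j : Vm) : (Fin n ⊕ Fin n) → ℂ)
          = -((f j : Vm) : (Fin n ⊕ Fin n) → ℂ) := (hmemm _).mp (f j).2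
      have hAc : A *ᵥ col (Sum.inr j) = ((f j : Vm) : (Fin n ⊕ Fin n) → ℂ) := by
        simp [hcoldef, Matrix.mulVec_neg, hfj]
      rw [hlhs, hAc]
      simp [Matrix.mul_apply, hLm2, mul_ite, Finset.sum_ite_eq', hg, hcoldef]
  have hsurj : Function.Surjective g.mulVec := by
    have hrange : ∀ c, col c ∈ LinearMap.range g.mulVecLin :=
      fun c => ⟨Pi.single c 1, hgcol c⟩
    have hVpR : Vp ≤ LinearMap.range g.mulVecLin := by
      have h1 : Vp = Submodule.map Vp.subtype ⊤ := by rw [Submodule.map_subtype_top]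
      rw [h1, ← e.span_eq, Submodule.map_span, Submodule.span_le]
      rintro _ ⟨_, ⟨i, rfl⟩, rfl⟩
      simpa [hcoldef] using hrange (Sum.inl i)
    have hVmR : Vm ≤ LinearMap.range g.mulVecLin := by
      have h1 : Vm = Submodule.map Vm.subtype ⊤ := by rw [Submodule.map_subtype_top]
      rw [h1, ← f.span_eq, Submodule.map_span, Submodule.span_le]
      rintro _ ⟨_, ⟨j, rfl⟩, rfl⟩
      have h0 : (Vm.subtype (f j) : (Fin n ⊕ Fin n) → ℂ) = -col (Sum.inr j) := by
        simp [hcoldef]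
      rw [h0]
      exact neg_mem (hrange (Sum.inr j))
    have htop : LinearMap.range g.mulVecLin = ⊤ := by
      rw [eq_top_iff, ← hco]
      exact sup_le hVpR hVmR
    intro v
    obtain ⟨w, hw⟩ := LinearMap.range_eq_top.mp htop v
    exact ⟨w, by rw [← Matrix.mulVecLin_apply, hw]⟩
  have hgu : IsUnit g := Matrix.mulVec_surjective_iff_isUnit.mp hsurj
  have hdet : IsUnit g.det := (Matrix.isUnit_iff_isUnit_det g).mp hgu
  refine ⟨g, hg1, ?_⟩
  calc A = A * (g * g⁻¹) := by rw [Matrix.mul_nonsing_inv g hdet, mul_one]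
    _ = (A * g) * g⁻¹ := by noncomm_ring
    _ = g * Lm n * g⁻¹ := by rw [hAg]

end SympAux

/-- **The symplectic orbit of `Λ = diag(I,−I)`.**  The conjugation orbit
`{g Λ g⁻¹ : g ∈ Sp(2n,ℂ)}` equals the set of matrices `A ∈ M_{2n}(ℂ)` with
`Aᵀ J + J A = 0` and `A² = I`; equivalently it is the set of block matrices
`[[x,y],[z,−xᵀ]]` with `y`, `z` symmetric, whose square is the identity. -/
theorem symplectic_orbit_of_lambda (n : ℕ) (hn : 1 ≤ n)
    (J : Matrix (Fin n ⊕ Fin n) (Fin n ⊕ Fin n) ℂ)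
    (hJ : J = Matrix.fromBlocks 0 (-1) 1 0)
    (Λ : Matrix (Fin n ⊕ Fin n) (Fin n ⊕ Fin n) ℂ)
    (hΛ : Λ = Matrix.fromBlocks 1 0 0 (-1)) :
    ({A | ∃ g : Matrix (Fin n ⊕ Fin n) (Fin n ⊕ Fin n) ℂ,
        gᵀ * J * g = J ∧ A = g * Λ * g⁻¹}
      = {A | Aᵀ * J + J * A = 0 ∧ A * A = 1}) ∧
    ({A | ∃ g : Matrix (Fin n ⊕ Fin n) (Fin n ⊕ Fin n) ℂ,
        gᵀ * J * g = J ∧ A = g * Λ * g⁻¹}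
      = {A | (∃ x y z : Matrix (Fin n) (Fin n) ℂ,
          yᵀ = y ∧ zᵀ = z ∧ A = Matrix.fromBlocks x y z (-xᵀ)) ∧ A * A = 1}) := by
  subst hJ hΛ
  have key : {A | ∃ g : Matrix (Fin n ⊕ Fin n) (Fin n ⊕ Fin n) ℂ,
        gᵀ * SympAux.Jm n * g = SympAux.Jm n ∧ A = g * SympAux.Lm n * g⁻¹}
      = {A | Aᵀ * SympAux.Jm n + SympAux.Jm n * A = 0 ∧ A * A = 1} := by
    ext A
    simp only [Set.mem_setOf_eq]
    constructor
    · rintro ⟨g, hg, rfl⟩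
      exact SympAux.forward hg
    · rintro ⟨h1, h2⟩
      obtain ⟨g, hg, hA⟩ := SympAux.exists_g A h1 h2
      exact ⟨g, hg, hA⟩
  have blocks : ∀ A : Matrix (Fin n ⊕ Fin n) (Fin n ⊕ Fin n) ℂ,
      Aᵀ * SympAux.Jm n + SympAux.Jm n * A = 0 ↔
        ∃ x y z : Matrix (Fin n) (Fin n) ℂ,
          yᵀ = y ∧ zᵀ = z ∧ A = Matrix.fromBlocks x y z (-xᵀ) := by
    intro A
    constructor
    · intro h
      set a := A.toBlocks₁₁
      set b := A.toBlocks₁₂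
      set c := A.toBlocks₂₁
      set d := A.toBlocks₂₂
      have hA : A = Matrix.fromBlocks a b c d := (Matrix.fromBlocks_toBlocks A).symm
      rw [hA] at h
      have h' : Matrix.fromBlocks (cᵀ + -c) (-aᵀ + -d) (dᵀ + a) (-bᵀ + b)
          = (0 : Matrix (Fin n ⊕ Fin n) (Fin n ⊕ Fin n) ℂ) := by
        rw [← h]
        simp [Matrix.fromBlocks_transpose, Matrix.fromBlocks_multiply,
          ← Matrix.fromBlocks_add]
      rw [← Matrix.fromBlocks_zero] at h'
      have h11 := congrArg Matrix.toBlocks₁₁ h'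
      have h12 := congrArg Matrix.toBlocks₁₂ h'
      have h22 := congrArg Matrix.toBlocks₂₂ h'
      simp only [Matrix.toBlocks_fromBlocks₁₁, Matrix.toBlocks_fromBlocks₁₂,
        Matrix.toBlocks_fromBlocks₂₂] at h11 h12 h22
      rw [neg_add_eq_zero] at h22 h12
      rw [add_neg_eq_zero] at h11
      refine ⟨a, b, c, h22, h11, ?_⟩
      rw [hA]
      congr 1
      rw [h12, neg_neg]
    · rintro ⟨x, y, z, hy, hz, rfl⟩
      simp [Matrix.fromBlocks_transpose, Matrix.fromBlocks_multiply,
        Matrix.fromBlocks_add, hy, hz]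
  refine ⟨key, ?_⟩
  rw [key]
  ext A
  simp only [Set.mem_setOf_eq]
  rw [blocks A]
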